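/- Let l ∈ {0,1,2}. There exists θ₀ ∈ (π/2, π) such that for every θ ∈ (π/2, θ₀) there is a constant c > 0 with the following property: for every τ > 0 and every z ∈ Σ_θ with |Im z| ≤ π/τ, | (γ_l(e^{−zτ})/l!) · τ^{l+1} − z^{−l−1} | ≤ c τ^{l+1}. -/

import Mathlib

open MeasureTheory Real Set

noncomputable section

/-- The open sector `Σ_φ = {z ∈ ℂ \ {0} : |arg z| < φ}`. -/
def InSector (φ : ℝ) (z : ℂ) : Prop := z ≠ 0 ∧ |Complex.arg z| < φ

/-- Rational closed form of `γ_l(ξ) = Σ_{n≥1} n^l ξ^n` for `l = 0, 1, 2`. -/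
def gammaL (l : ℕ) (ξ : ℂ) : ℂ :=
  if l = 0 then ξ / (1 - ξ)
  else if l = 1 then ξ / (1 - ξ)^2
  else (ξ + ξ^2) / (1 - ξ)^3

lemma expBound4 {w : ℂ} (h : ‖w‖ ≤ 1/2) : ‖Complex.exp (-w) - (1 - w + w^2/2 - w^3/6)‖ ≤ 5/96*‖w‖^4 := by
  have h1 : ‖-w‖ ≤ 1 := by rw [norm_neg]; linarith
  have h2 := Complex.exp_bound h1 (n := 4) (by norm_num)
  simp only [Finset.sum_range_succ, Finset.sum_range_zero, Nat.factorial] at h2 ⊢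
  push_cast at h2
  rw [show (0 + (-w)^0/1 + (-w)^1/1 + (-w)^2/2 + (-w)^3/6) = (1 - w + w^2/2 - w^3/6) by ring,
    show ‖-w‖ = ‖w‖ from norm_neg w] at h2
  refine h2.trans ?_; norm_num [mul_comm]

lemma expBound3 {w : ℂ} (h : ‖w‖ ≤ 1/2) : ‖Complex.exp (-w) - (1 - w + w^2/2)‖ ≤ 2/9*‖w‖^3 := by
  have h1 : ‖-w‖ ≤ 1 := by rw [norm_neg]; linarith
  have h2 := Complex.exp_bound h1 (n := 3) (by norm_num)
  simp only [Finset.sum_range_succ, Finset.sum_range_zero, Nat.factorial] at h2 ⊢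
  push_cast at h2
  rw [show (0 + (-w)^0/1 + (-w)^1/1 + (-w)^2/2) = (1 - w + w^2/2) by ring,
    show ‖-w‖ = ‖w‖ from norm_neg w] at h2
  refine h2.trans ?_; norm_num [mul_comm]

lemma expBound2 {w : ℂ} (h : ‖w‖ ≤ 1/2) : ‖Complex.exp (-w) - (1 - w)‖ ≤ 3/4*‖w‖^2 := by
  have h1 : ‖-w‖ ≤ 1 := by rw [norm_neg]; linarith
  have h2 := Complex.exp_bound h1 (n := 2) (by norm_num)
  simp only [Finset.sum_range_succ, Finset.sum_range_zero, Nat.factorial] at h2 ⊢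
  push_cast at h2
  rw [show (0 + (-w)^0/1 + (-w)^1/1) = (1 - w) by ring,
    show ‖-w‖ = ‖w‖ from norm_neg w] at h2
  refine h2.trans ?_; norm_num [mul_comm]

-- norm of exp
lemma normExpNeg (w : ℂ) : ‖Complex.exp (-w)‖ = Real.exp (-w.re) := by
  rw [Complex.norm_exp, Complex.neg_re]


-- near region denominator bound
lemma near_u {w : ℂ} (h : ‖w‖ ≤ 1/2) : 2/3*‖w‖ ≤ ‖1 - Complex.exp (-w)‖ := by
  have hE := expBound3 h
  have h0 : (0:ℝ) ≤ ‖w‖ := norm_nonneg w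
  have key : ‖w‖ - ‖w^2/2‖ - ‖Complex.exp (-w) - (1 - w + w^2/2)‖ ≤ ‖1 - Complex.exp (-w)‖ := by
    have : w = (1 - Complex.exp (-w)) + (w^2/2) + (Complex.exp (-w) - (1 - w + w^2/2)) := by ring
    calc ‖w‖ - ‖w^2/2‖ - ‖Complex.exp (-w) - (1 - w + w^2/2)‖
        ≤ ‖(1 - Complex.exp (-w)) + (w^2/2) + (Complex.exp (-w) - (1 - w + w^2/2))‖
            - ‖w^2/2‖ - ‖Complex.exp (-w) - (1 - w + w^2/2)‖ := by rw [← this]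
      _ ≤ _ := by
          have t1 := norm_add_le ((1 - Complex.exp (-w)) + (w^2/2)) (Complex.exp (-w) - (1 - w + w^2/2))
          have t2 := norm_add_le (1 - Complex.exp (-w)) (w^2/2)
          linarith
  have h2 : ‖w^2/2‖ = ‖w‖^2/2 := by rw [norm_div, norm_pow]; norm_num
  rw [h2] at key
  nlinarith

lemma delta_exists : ∃ δ > (0:ℝ), ∀ w : ℂ, 1/2 ≤ ‖w‖ → ‖w‖ ≤ 4 → δ ≤ ‖1 - Complex.exp (-w)‖ := by
  set K : Set ℂ := {w | 1/2 ≤ ‖w‖} ∩ Metric.closedBall 0 4 with hKdef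
  have hKc : IsCompact K := by
    refine (isCompact_closedBall (0:ℂ) 4).of_isClosed_subset ?_ (by intro x hx; exact hx.2)
    exact (isClosed_le continuous_const continuous_norm).inter Metric.isClosed_closedBall
  have hne : K.Nonempty := ⟨1, by constructor <;> simp <;> norm_num⟩
  have hcont : ContinuousOn (fun w : ℂ => ‖1 - Complex.exp (-w)‖) K :=
    ((continuous_const.sub (Complex.continuous_exp.comp continuous_neg)).norm).continuousOn
  obtain ⟨w₀, hw₀K, hmin⟩ := hKc.exists_isMinOn hne hcont
  refine ⟨‖1 - Complex.exp (-w₀)‖, ?_, fun w h1 h2 => hmin ⟨h1, by simpa [Metric.mem_closedBall] using h2⟩⟩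
  rw [gt_iff_lt, norm_pos_iff]
  intro hzero
  have hexp : Complex.exp (-w₀) = 1 := by linear_combination -hzero
  obtain ⟨n, hn⟩ := Complex.exp_eq_one_iff.mp hexp
  have hnorm : ‖w₀‖ = |(n:ℝ)| * (2*π) := by
    have : w₀ = -(n * (2*π*Complex.I)) := by rw [← hn]; ring
    rw [this]
    simp [abs_of_pos Real.pi_pos, norm_mul, Complex.norm_real]
  obtain ⟨h1, h2⟩ := hw₀K
  simp only [Metric.mem_closedBall, Complex.dist_eq, sub_zero] at h2
  rcases eq_or_ne n 0 with rfl | hn0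
  · simp at hnorm; rw [hnorm] at h1; norm_num at h1
  · have : (1:ℝ) ≤ |(n:ℝ)| := by
      rw [← Int.cast_abs]; exact_mod_cast Int.one_le_abs hn0
    have hpi : (3:ℝ) ≤ π := by linarith [Real.pi_gt_three]
    have : ‖w₀‖ ≥ 6 := by rw [hnorm]; nlinarith
    have h2' : ‖w₀‖ ≤ 4 := by exact h2
    linarith

lemma F0 (δ : ℝ) (hδ : 0 < δ)
    (hδle : ∀ v : ℂ, 1/2 ≤ ‖v‖ → ‖v‖ ≤ 4 → δ ≤ ‖1 - Complex.exp (-v)‖)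
    (w : ℂ) (hw : w ≠ 0) (hre : 4 ≤ ‖w‖ → 2 ≤ w.re) :
    ‖Complex.exp (-w)/(1 - Complex.exp (-w)) - w⁻¹‖
      ≤ Real.exp 8/δ^3 + Real.exp 8/δ^2 + Real.exp 8/δ + 10 := by
  set ξ := Complex.exp (-w) with hξdef
  have ha0 : 0 < ‖w‖ := norm_pos_iff.mpr hw
  have p1 : (0:ℝ) ≤ Real.exp 8/δ^3 := by positivity
  have p2 : (0:ℝ) ≤ Real.exp 8/δ^2 := by positivity
  have p3 : (0:ℝ) ≤ Real.exp 8/δ := by positivity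
  rcases le_or_gt ‖w‖ (1/2) with hnear | h1
  · -- near region
    have hu : 2/3*‖w‖ ≤ ‖1-ξ‖ := near_u hnear
    have hu0 : (1-ξ) ≠ 0 := by
      intro h; rw [h, norm_zero] at hu; nlinarith
    have hE : ‖ξ - (1 - w)‖ ≤ 3/4*‖w‖^2 := expBound2 hnear
    have hId : ξ/(1-ξ) - w⁻¹ = (-w^2 + w*(ξ - (1-w)) + (ξ - (1-w)))/((1-ξ)*w) := by
      field_simp; ring
    rw [hId, norm_div]
    have e1 : ‖-w^2‖ = ‖w‖^2 := by rw [norm_neg, norm_pow]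
    have e2 : ‖w*(ξ-(1-w))‖ ≤ ‖w‖*(3/4*‖w‖^2) := by
      rw [norm_mul]; exact mul_le_mul_of_nonneg_left hE (norm_nonneg w)
    have t1 := norm_add_le (-w^2 + w*(ξ-(1-w))) (ξ-(1-w))
    have t2 := norm_add_le (-w^2) (w*(ξ-(1-w)))
    have hnum : ‖-w^2 + w*(ξ-(1-w)) + (ξ-(1-w))‖ ≤ 17/8*‖w‖^2 := by nlinarith
    have hden : 2/3*‖w‖^2 ≤ ‖(1-ξ)*w‖ := by rw [norm_mul]; nlinarith
    have hfin : ‖-w^2 + w*(ξ-(1-w)) + (ξ-(1-w))‖/‖(1-ξ)*w‖ ≤ 4 := by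
      rw [div_le_iff₀ (by nlinarith)]; nlinarith
    linarith
  · rcases le_or_gt 4 ‖w‖ with hfar | h4
    · -- far region
      have hre2 := hre hfar
      have hξ : ‖ξ‖ ≤ 1/2 := by
        rw [hξdef, normExpNeg]
        have e1 : Real.exp (-w.re) ≤ Real.exp (-2) := Real.exp_le_exp.mpr (by linarith)
        have e2 : Real.exp (-2) ≤ 1/2 := by
          rw [Real.exp_neg]
          have : (2:ℝ) ≤ Real.exp 2 := by nlinarith [Real.add_one_le_exp (2:ℝ)]
          rw [show (1:ℝ)/2 = 2⁻¹ by norm_num]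
          exact inv_anti₀ (by norm_num) this
        linarith
      have hu : 1/2 ≤ ‖1-ξ‖ := by
        have := norm_sub_norm_le (1:ℂ) ξ
        rw [norm_one] at this; linarith
      have b1 : ‖ξ/(1-ξ)‖ ≤ 1 := by
        rw [norm_div, div_le_one (by linarith)]; linarith
      have b2 : ‖w⁻¹‖ ≤ 1/4 := by
        rw [norm_inv, show (1:ℝ)/4 = 4⁻¹ by norm_num]
        exact inv_anti₀ (by norm_num) hfar
      have := norm_sub_le (ξ/(1-ξ)) w⁻¹
      linarith
    · -- mid region
      have hδu := hδle w (le_of_lt h1) (le_of_lt h4)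
      have hξ : ‖ξ‖ ≤ Real.exp 4 := by
        rw [hξdef, normExpNeg]
        apply Real.exp_le_exp.mpr
        have h5 : |w.re| ≤ ‖w‖ := Complex.abs_re_le_norm w
        have := neg_le_abs w.re
        linarith
      have b1 : ‖ξ/(1-ξ)‖ ≤ Real.exp 4/δ := by
        rw [norm_div]
        exact div_le_div₀ (Real.exp_pos 4).le hξ hδ hδu
      have b2 : ‖w⁻¹‖ ≤ 2 := by
        rw [norm_inv]
        rw [show (2:ℝ) = (1/2)⁻¹ by norm_num]
        exact inv_anti₀ (by norm_num) (le_of_lt h1)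
      have b3 : Real.exp 4/δ ≤ Real.exp 8/δ := by
        exact div_le_div₀ (Real.exp_pos 8).le (Real.exp_le_exp.mpr (by norm_num)) hδ le_rfl
      have := norm_sub_le (ξ/(1-ξ)) w⁻¹
      linarith

set_option maxHeartbeats 1000000 in
lemma F1 (δ : ℝ) (hδ : 0 < δ)
    (hδle : ∀ v : ℂ, 1/2 ≤ ‖v‖ → ‖v‖ ≤ 4 → δ ≤ ‖1 - Complex.exp (-v)‖)
    (w : ℂ) (hw : w ≠ 0) (hre : 4 ≤ ‖w‖ → 2 ≤ w.re) :
    ‖Complex.exp (-w)/(1 - Complex.exp (-w))^2 - (w^2)⁻¹‖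
      ≤ Real.exp 8/δ^3 + Real.exp 8/δ^2 + Real.exp 8/δ + 10 := by
  obtain ⟨ξ, hξdef⟩ : ∃ ξ, ξ = Complex.exp (-w) := ⟨_, rfl⟩
  rw [← hξdef]
  have ha0 : 0 < ‖w‖ := norm_pos_iff.mpr hw
  have p1 : (0:ℝ) ≤ Real.exp 8/δ^3 := by positivity
  have p2 : (0:ℝ) ≤ Real.exp 8/δ^2 := by positivity
  have p3 : (0:ℝ) ≤ Real.exp 8/δ := by positivity
  rcases le_or_gt ‖w‖ (1/2) with hnear | h1
  · -- near region
    have hu : 2/3*‖w‖ ≤ ‖1-ξ‖ := by rw [hξdef]; exact near_u hnear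
    have hu0 : (1-ξ) ≠ 0 := by
      intro h; rw [h, norm_zero] at hu; nlinarith
    obtain ⟨E, hEdef⟩ : ∃ E : ℂ, E = ξ - (1 - w + w^2/2) := ⟨_, rfl⟩
    have hE : ‖E‖ ≤ 2/9*‖w‖^3 := by rw [hEdef, hξdef]; exact expBound3 hnear
    have hb0 : (0:ℝ) ≤ ‖E‖ := norm_nonneg E
    have hId : ξ/(1-ξ)^2 - (w^2)⁻¹ = (w^4/4 + 2*w*E - E^2)/((1-ξ)^2*w^2) := by
      rw [hEdef]; field_simp; ring
    rw [hId, norm_div]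
    have e1 : ‖w^4/4‖ = ‖w‖^4/4 := by
      rw [norm_div, norm_pow]; norm_num
    have e2 : ‖2*w*E‖ = 2*(‖w‖*‖E‖) := by
      rw [norm_mul, norm_mul]; norm_num; ring
    have e3 : ‖E^2‖ = ‖E‖^2 := norm_pow E 2
    have t1 := norm_sub_le (w^4/4 + 2*w*E) (E^2)
    have t2 := norm_add_le (w^4/4) (2*w*E)
    have ha2 : ‖w‖^2 ≤ 1/4 := by nlinarith
    have h6 : ‖w‖^6 ≤ 1/4*‖w‖^4 := by
      nlinarith [mul_le_mul_of_nonneg_left ha2 (pow_nonneg (norm_nonneg w) 4)]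
    have c1 : ‖w‖*‖E‖ ≤ 2/9*‖w‖^4 := by
      nlinarith [mul_le_mul_of_nonneg_left hE (norm_nonneg w)]
    have c2 : ‖E‖^2 ≤ 4/81*‖w‖^6 := by
      nlinarith [mul_le_mul hE hE hb0 (by positivity)]
    have hnum : ‖w^4/4 + 2*w*E - E^2‖ ≤ ‖w‖^4 := by
      linarith [t1, t2, e1.le, e3.le, pow_pos ha0 4]
    have husq : 4/9*‖w‖^2 ≤ ‖1-ξ‖^2 := by nlinarith
    have hden : 4/9*‖w‖^4 ≤ ‖(1-ξ)^2*w^2‖ := by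
      rw [norm_mul, norm_pow, norm_pow]
      nlinarith [mul_le_mul_of_nonneg_right husq (sq_nonneg ‖w‖)]
    have hdpos : (0:ℝ) < ‖(1-ξ)^2*w^2‖ := by linarith [pow_pos ha0 4]
    have hfin : ‖w^4/4 + 2*w*E - E^2‖/‖(1-ξ)^2*w^2‖ ≤ 4 := by
      rw [div_le_iff₀ hdpos]; linarith [pow_pos ha0 4]
    linarith
  · rcases le_or_gt 4 ‖w‖ with hfar | h4
    · -- far region
      have hre2 := hre hfar
      have hξ : ‖ξ‖ ≤ 1/2 := by
        rw [hξdef, normExpNeg]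
        have e1 : Real.exp (-w.re) ≤ Real.exp (-2) := Real.exp_le_exp.mpr (by linarith)
        have e2 : Real.exp (-2) ≤ 1/2 := by
          rw [Real.exp_neg]
          have : (2:ℝ) ≤ Real.exp 2 := by nlinarith [Real.add_one_le_exp (2:ℝ)]
          rw [show (1:ℝ)/2 = 2⁻¹ by norm_num]
          exact inv_anti₀ (by norm_num) this
        linarith
      have hu : 1/2 ≤ ‖1-ξ‖ := by
        have := norm_sub_norm_le (1:ℂ) ξ
        rw [norm_one] at this; linarith
      have b1 : ‖ξ/(1-ξ)^2‖ ≤ 2 := by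
        rw [norm_div, norm_pow, div_le_iff₀ (by nlinarith)]; nlinarith
      have b2 : ‖(w^2)⁻¹‖ ≤ 1/16 := by
        rw [norm_inv, norm_pow, show (1:ℝ)/16 = ((4:ℝ)^2)⁻¹ by norm_num]
        exact inv_anti₀ (by norm_num) (by nlinarith)
      have := norm_sub_le (ξ/(1-ξ)^2) (w^2)⁻¹
      linarith
    · -- mid region
      have hδu : δ ≤ ‖1-ξ‖ := by rw [hξdef]; exact hδle w (le_of_lt h1) (le_of_lt h4)
      have hξ : ‖ξ‖ ≤ Real.exp 4 := by
        rw [hξdef, normExpNeg]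
        apply Real.exp_le_exp.mpr
        have h5 : |w.re| ≤ ‖w‖ := Complex.abs_re_le_norm w
        have := neg_le_abs w.re
        linarith
      have b1 : ‖ξ/(1-ξ)^2‖ ≤ Real.exp 4/δ^2 := by
        rw [norm_div, norm_pow]
        exact div_le_div₀ (Real.exp_pos 4).le hξ (by positivity)
          (by nlinarith [mul_le_mul hδu hδu hδ.le (norm_nonneg (1-ξ))])
      have b2 : ‖(w^2)⁻¹‖ ≤ 4 := by
        rw [norm_inv, norm_pow, show (4:ℝ) = ((1/2:ℝ)^2)⁻¹ by norm_num]
        exact inv_anti₀ (by norm_num) (by nlinarith)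
      have b3 : Real.exp 4/δ^2 ≤ Real.exp 8/δ^2 :=
        div_le_div₀ (Real.exp_pos 8).le (Real.exp_le_exp.mpr (by norm_num)) (by positivity) le_rfl
      have := norm_sub_le (ξ/(1-ξ)^2) (w^2)⁻¹
      linarith

set_option maxHeartbeats 1000000 in
lemma F2 (δ : ℝ) (hδ : 0 < δ)
    (hδle : ∀ v : ℂ, 1/2 ≤ ‖v‖ → ‖v‖ ≤ 4 → δ ≤ ‖1 - Complex.exp (-v)‖)
    (w : ℂ) (hw : w ≠ 0) (hre : 4 ≤ ‖w‖ → 2 ≤ w.re) :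
    ‖(Complex.exp (-w) + Complex.exp (-w)^2)/(1 - Complex.exp (-w))^3/2 - (w^3)⁻¹‖
      ≤ Real.exp 8/δ^3 + Real.exp 8/δ^2 + Real.exp 8/δ + 10 := by
  obtain ⟨ξ, hξdef⟩ : ∃ ξ, ξ = Complex.exp (-w) := ⟨_, rfl⟩
  rw [← hξdef]
  have ha0 : 0 < ‖w‖ := norm_pos_iff.mpr hw
  have p1 : (0:ℝ) ≤ Real.exp 8/δ^3 := by positivity
  have p2 : (0:ℝ) ≤ Real.exp 8/δ^2 := by positivity
  have p3 : (0:ℝ) ≤ Real.exp 8/δ := by positivity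
  rcases le_or_gt ‖w‖ (1/2) with hnear | h1
  · -- near region
    have hu : 2/3*‖w‖ ≤ ‖1-ξ‖ := by rw [hξdef]; exact near_u hnear
    have hu0 : (1-ξ) ≠ 0 := by
      intro h; rw [h, norm_zero] at hu; nlinarith
    obtain ⟨E, hEdef⟩ : ∃ E : ℂ, E = ξ - (1 - w + w^2/2 - w^3/6) := ⟨_, rfl⟩
    have hE : ‖E‖ ≤ 5/96*‖w‖^4 := by rw [hEdef, hξdef]; exact expBound4 hnear
    have hb0 : (0:ℝ) ≤ ‖E‖ := norm_nonneg E
    obtain ⟨P, hPdef⟩ : ∃ P : ℂ, P = 2*E^2 - 6*w*E + 6*w^2 + 3*w^2*E - 3*w^3 + 3*w^4/2 - w^6/6 :=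
      ⟨_, rfl⟩
    obtain ⟨Q, hQdef⟩ : ∃ Q : ℂ, Q = -(1:ℂ)/4 + w/6 - w^2/12 + w^3/54 := ⟨_, rfl⟩
    have hId : (ξ+ξ^2)/(1-ξ)^3/2 - (w^3)⁻¹ = (E*P + w^6*Q)/(2*(1-ξ)^3*w^3) := by
      rw [hPdef, hQdef, hEdef, eq_div_iff (by
        exact mul_ne_zero (mul_ne_zero two_ne_zero (pow_ne_zero 3 hu0)) (pow_ne_zero 3 hw))]
      field_simp
      ring
    rw [hId, norm_div]
    -- powers of ‖w‖
    have ha2 : ‖w‖^2 ≤ 1/4 := by nlinarith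
    have d4 : ‖w‖^3 ≤ 1/2*‖w‖^2 := by nlinarith
    have d5 : ‖w‖^4 ≤ 1/4*‖w‖^2 := by nlinarith [sq_nonneg ‖w‖, mul_le_mul_of_nonneg_left ha2 (sq_nonneg ‖w‖)]
    have d6 : ‖w‖^6 ≤ 1/16*‖w‖^2 := by
      nlinarith [mul_le_mul d5 ha2 (sq_nonneg ‖w‖) (by norm_num), pow_nonneg (norm_nonneg w) 2]
    have hbq : ‖E‖ ≤ 5/384*‖w‖^2 := by nlinarith
    have hbc : ‖E‖ ≤ 5/1536 := by nlinarith
    -- bound on P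
    have hP : ‖P‖ ≤ 8*‖w‖^2 := by
      rw [hPdef]
      have t3 := norm_sub_le (2*E^2 - 6*w*E + 6*w^2 + 3*w^2*E - 3*w^3 + 3*w^4/2) (w^6/6)
      have t4 := norm_add_le (2*E^2 - 6*w*E + 6*w^2 + 3*w^2*E - 3*w^3) (3*w^4/2)
      have t5 := norm_sub_le (2*E^2 - 6*w*E + 6*w^2 + 3*w^2*E) (3*w^3)
      have t6 := norm_add_le (2*E^2 - 6*w*E + 6*w^2) (3*w^2*E)
      have t7 := norm_add_le (2*E^2 - 6*w*E) (6*w^2)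
      have t8 := norm_sub_le (2*E^2) (6*w*E)
      have a1 : ‖2*E^2‖ = 2*‖E‖^2 := by rw [norm_mul, norm_pow]; norm_num
      have a2 : ‖6*w*E‖ = 6*(‖w‖*‖E‖) := by rw [norm_mul, norm_mul]; norm_num; ring
      have a3 : ‖6*w^2‖ = 6*‖w‖^2 := by rw [norm_mul, norm_pow]; norm_num
      have a4 : ‖3*w^2*E‖ = 3*(‖w‖^2*‖E‖) := by rw [norm_mul, norm_mul, norm_pow]; norm_num; ring
      have a5 : ‖3*w^3‖ = 3*‖w‖^3 := by rw [norm_mul, norm_pow]; norm_num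
      have a6 : ‖3*w^4/2‖ = 3*‖w‖^4/2 := by rw [norm_div, norm_mul, norm_pow]; norm_num
      have a7 : ‖w^6/6‖ = ‖w‖^6/6 := by rw [norm_div, norm_pow]; norm_num
      have d1 : ‖E‖^2 ≤ 5/1536*(5/384*‖w‖^2) := by
        nlinarith [mul_le_mul hbc hbq hb0 (by norm_num)]
      have d2 : ‖w‖*‖E‖ ≤ 1/2*(5/384*‖w‖^2) := by
        nlinarith [mul_le_mul hnear hbq hb0 (by norm_num)]
      have d3 : ‖w‖^2*‖E‖ ≤ 5/1536*‖w‖^2 := by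
        nlinarith [mul_le_mul_of_nonneg_left hbc (sq_nonneg ‖w‖)]
      linarith
    -- bound on Q
    have hQ : ‖Q‖ ≤ 3/8 := by
      rw [hQdef]
      have u1 := norm_add_le (-(1:ℂ)/4 + w/6 - w^2/12) (w^3/54)
      have u2 := norm_sub_le (-(1:ℂ)/4 + w/6) (w^2/12)
      have u3 := norm_add_le (-(1:ℂ)/4) (w/6)
      have b1 : ‖-(1:ℂ)/4‖ = 1/4 := by norm_num
      have b2 : ‖w/6‖ = ‖w‖/6 := by rw [norm_div]; norm_num
      have b3 : ‖w^2/12‖ = ‖w‖^2/12 := by rw [norm_div, norm_pow]; norm_num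
      have b4 : ‖w^3/54‖ = ‖w‖^3/54 := by rw [norm_div, norm_pow]; norm_num
      nlinarith
    -- numerator
    have hN : ‖E*P + w^6*Q‖ ≤ ‖w‖^6 := by
      have v1 := norm_add_le (E*P) (w^6*Q)
      have v2 : ‖E*P‖ ≤ (5/96*‖w‖^4)*(8*‖w‖^2) := by
        rw [norm_mul]; exact mul_le_mul hE hP (norm_nonneg P) (by positivity)
      have v3 : ‖w^6*Q‖ ≤ ‖w‖^6*(3/8) := by
        rw [norm_mul, norm_pow]; exact mul_le_mul_of_nonneg_left hQ (by positivity)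
      nlinarith
    -- denominator
    have hcube : (2/3*‖w‖)^3 ≤ ‖1-ξ‖^3 := pow_le_pow_left₀ (by positivity) hu 3
    have hden : 16/27*‖w‖^6 ≤ ‖2*(1-ξ)^3*w^3‖ := by
      rw [norm_mul, norm_mul, norm_pow, norm_pow]
      have : ‖(2:ℂ)‖ = 2 := by norm_num
      rw [this]
      nlinarith [mul_le_mul_of_nonneg_right hcube (pow_nonneg (norm_nonneg w) 3)]
    have hdpos : (0:ℝ) < ‖2*(1-ξ)^3*w^3‖ := by nlinarith [pow_pos ha0 6]
    have hfin : ‖E*P + w^6*Q‖/‖2*(1-ξ)^3*w^3‖ ≤ 2 := by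
      rw [div_le_iff₀ hdpos]; nlinarith [pow_pos ha0 6]
    linarith
  · rcases le_or_gt 4 ‖w‖ with hfar | h4
    · -- far region
      have hre2 := hre hfar
      have hξ : ‖ξ‖ ≤ 1/2 := by
        rw [hξdef, normExpNeg]
        have e1 : Real.exp (-w.re) ≤ Real.exp (-2) := Real.exp_le_exp.mpr (by linarith)
        have e2 : Real.exp (-2) ≤ 1/2 := by
          rw [Real.exp_neg]
          have : (2:ℝ) ≤ Real.exp 2 := by nlinarith [Real.add_one_le_exp (2:ℝ)]
          rw [show (1:ℝ)/2 = 2⁻¹ by norm_num]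
          exact inv_anti₀ (by norm_num) this
        linarith
      have hu : 1/2 ≤ ‖1-ξ‖ := by
        have := norm_sub_norm_le (1:ℂ) ξ
        rw [norm_one] at this; linarith
      have hs : ‖ξ+ξ^2‖ ≤ 3/4 := by
        have := norm_add_le ξ (ξ^2)
        rw [norm_pow] at this; nlinarith [norm_nonneg ξ]
      have hcube : 1/8 ≤ ‖1-ξ‖^3 := by
        nlinarith [pow_le_pow_left₀ (show (0:ℝ) ≤ 1/2 by norm_num) hu 3]
      have b1 : ‖(ξ+ξ^2)/(1-ξ)^3/2‖ ≤ 3 := by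
        rw [norm_div, norm_div, norm_pow, show ‖(2:ℂ)‖ = 2 by norm_num,
          div_le_iff₀ (by norm_num : (0:ℝ) < 2), div_le_iff₀ (by nlinarith [pow_le_pow_left₀ (show (0:ℝ) ≤ 1/2 by norm_num) hu 3] : (0:ℝ) < ‖1-ξ‖^3)]
        nlinarith [pow_le_pow_left₀ (show (0:ℝ) ≤ 1/2 by norm_num) hu 3]
      have b2 : ‖(w^3)⁻¹‖ ≤ 1/64 := by
        rw [norm_inv, norm_pow, show (1:ℝ)/64 = ((4:ℝ)^3)⁻¹ by norm_num]
        exact inv_anti₀ (by norm_num) (by nlinarith [pow_le_pow_left₀ (show (0:ℝ) ≤ 4 by norm_num) hfar 3])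
      have := norm_sub_le ((ξ+ξ^2)/(1-ξ)^3/2) (w^3)⁻¹
      linarith
    · -- mid region
      have hδu : δ ≤ ‖1-ξ‖ := by rw [hξdef]; exact hδle w (le_of_lt h1) (le_of_lt h4)
      have hξ : ‖ξ‖ ≤ Real.exp 4 := by
        rw [hξdef, normExpNeg]
        apply Real.exp_le_exp.mpr
        have h5 : |w.re| ≤ ‖w‖ := Complex.abs_re_le_norm w
        have := neg_le_abs w.re
        linarith
      have hs : ‖ξ+ξ^2‖ ≤ 2*Real.exp 8 := by
        have t := norm_add_le ξ (ξ^2)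
        rw [norm_pow] at t
        have e48 : Real.exp 4 ≤ Real.exp 8 := Real.exp_le_exp.mpr (by norm_num)
        have e2 : ‖ξ‖^2 ≤ Real.exp 4*Real.exp 4 := by
          nlinarith [norm_nonneg ξ, Real.exp_pos 4]
        have e3 : Real.exp 4*Real.exp 4 = Real.exp 8 := by
          rw [← Real.exp_add]; norm_num
        nlinarith [Real.exp_pos 4]
      have h3 : δ^3 ≤ ‖1-ξ‖^3 := pow_le_pow_left₀ hδ.le hδu 3
      have b1 : ‖(ξ+ξ^2)/(1-ξ)^3‖ ≤ 2*Real.exp 8/δ^3 := by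
        rw [norm_div, norm_pow]
        exact div_le_div₀ (by positivity) hs (by positivity) h3
      have e : ‖(ξ+ξ^2)/(1-ξ)^3/2‖ = ‖(ξ+ξ^2)/(1-ξ)^3‖/2 := by
        rw [norm_div, show ‖(2:ℂ)‖ = 2 by norm_num]
      have b2 : ‖(w^3)⁻¹‖ ≤ 8 := by
        rw [norm_inv, norm_pow, show (8:ℝ) = ((1/2:ℝ)^3)⁻¹ by norm_num]
        exact inv_anti₀ (by norm_num) (by nlinarith [pow_le_pow_left₀ (show (0:ℝ) ≤ 1/2 by norm_num) h1.le 3])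
      have := norm_sub_le ((ξ+ξ^2)/(1-ξ)^3/2) (w^3)⁻¹
      rw [e] at this
      have b1' : ‖(ξ+ξ^2)/(1-ξ)^3‖/2 ≤ Real.exp 8/δ^3 := by
        linarith [b1, (by ring : 2*Real.exp 8/δ^3 = 2*(Real.exp 8/δ^3))]
      linarith

-- geometry lemma: sector + strip forces Re w ≥ 2 when |w| ≥ 4
lemma sector_re (w : ℂ) (hw0 : w ≠ 0) (habs : |Complex.arg w| < 2*π/3)
    (hwim : |w.im| ≤ π) (h4 : 4 ≤ ‖w‖) : 2 ≤ w.re := by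
  have hπ : π < 3.15 := Real.pi_lt_d2
  have hπ3 : (3:ℝ) < π := Real.pi_gt_three
  have h0re : 0 ≤ w.re := by
    by_contra hneg
    push_neg at hneg
    have hwpos : (0:ℝ) < ‖w‖ := by linarith
    have hc : Real.cos (Complex.arg w) < 0 := by
      rw [Complex.cos_arg hw0]
      apply div_neg_of_neg_of_pos hneg (by linarith)
    have hgt : π/2 < |Complex.arg w| := by
      by_contra hle
      push_neg at hle
      have hmem := abs_le.mp hle
      have := Real.cos_nonneg_of_mem_Icc ⟨by linarith [hmem.1], hmem.2⟩
      linarith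
    -- |sin (arg w)| = sin |arg w|
    have hsabs : |Real.sin (Complex.arg w)| = Real.sin (|Complex.arg w|) := by
      rcases abs_cases (Complex.arg w) with ⟨h, hge⟩ | ⟨h, hlt⟩
      · rw [h]
        exact abs_of_nonneg (Real.sin_nonneg_of_nonneg_of_le_pi hge (Complex.arg_le_pi w))
      · rw [h, Real.sin_neg]
        have := Real.sin_nonneg_of_nonneg_of_le_pi (x := -(Complex.arg w)) (by linarith)
          (by linarith [Complex.neg_pi_lt_arg w])
        rw [Real.sin_neg] at this
        rw [abs_of_nonpos (by linarith)]
    have hmono : Real.sin (π/3) ≤ Real.sin (|Complex.arg w|) := by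
      have hpi := Complex.abs_arg_le_pi w
      have step : Real.sin (π/3) ≤ Real.sin (π - |Complex.arg w|) := by
        apply Real.strictMonoOn_sin.monotoneOn
        · constructor <;> linarith
        · constructor <;> linarith
        · linarith
      rwa [Real.sin_pi_sub] at step
    have hsin3 : Real.sin (π/3) = Real.sqrt 3 / 2 := Real.sin_pi_div_three
    have hsqrt : (1.7:ℝ) ≤ Real.sqrt 3 := by
      rw [show (1.7:ℝ) = Real.sqrt (1.7^2) by rw [Real.sqrt_sq] <;> norm_num]
      apply Real.sqrt_le_sqrt; norm_num
    -- |im| = ‖w‖ * |sin arg|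
    have him : |w.im| = ‖w‖ * |Real.sin (Complex.arg w)| := by
      have habs0 : ‖w‖ ≠ 0 := by
        exact norm_ne_zero_iff.mpr hw0
      rw [Complex.sin_arg, abs_div,
        abs_of_nonneg (norm_nonneg w)]
      field_simp
    rw [hsabs] at him
    have : 4 * (Real.sqrt 3/2) ≤ ‖w‖ * Real.sin (|Complex.arg w|) := by
      apply mul_le_mul h4 (by rw [← hsin3]; exact hmono) (by rw [← hsin3, hsin3]; positivity)
        (by linarith)
    nlinarith
  have h2 : ‖w‖^2 = w.re^2 + w.im^2 := by
    rw [Complex.sq_norm, Complex.normSq_apply]; ring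
  have him2 : w.im^2 ≤ π^2 := by nlinarith [abs_nonneg w.im, sq_abs w.im]
  nlinarith [sq_abs w.im]

lemma FBound (δ : ℝ) (hδ : 0 < δ)
    (hδle : ∀ v : ℂ, 1/2 ≤ ‖v‖ → ‖v‖ ≤ 4 → δ ≤ ‖1 - Complex.exp (-v)‖)
    (l : ℕ) (hl : l ≤ 2) (w : ℂ) (hw : w ≠ 0) (hre : 4 ≤ ‖w‖ → 2 ≤ w.re) :
    ‖gammaL l (Complex.exp (-w)) / (l.factorial : ℂ) - w ^ (-(l:ℤ) - 1)‖
      ≤ Real.exp 8/δ^3 + Real.exp 8/δ^2 + Real.exp 8/δ + 10 := by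
  interval_cases l
  · have h := F0 δ hδ hδle w hw hre
    have e : w ^ (-((0:ℕ):ℤ) - 1) = w⁻¹ := by norm_num
    rw [e]
    simpa [gammaL, Nat.factorial] using h
  · have h := F1 δ hδ hδle w hw hre
    have e : w ^ (-((1:ℕ):ℤ) - 1) = (w^2)⁻¹ := by
      rw [show (-((1:ℕ):ℤ) - 1) = -((2:ℕ):ℤ) by norm_num, zpow_neg, zpow_natCast]
    rw [e]
    simpa [gammaL, Nat.factorial] using h
  · have h := F2 δ hδ hδle w hw hre
    have e : w ^ (-((2:ℕ):ℤ) - 1) = (w^3)⁻¹ := by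
      rw [show (-((2:ℕ):ℤ) - 1) = -((3:ℕ):ℤ) by norm_num, zpow_neg, zpow_natCast]
    rw [e]
    have e2 : gammaL 2 (Complex.exp (-w)) / ((Nat.factorial 2 : ℕ) : ℂ)
        = (Complex.exp (-w) + Complex.exp (-w)^2)/(1 - Complex.exp (-w))^3/2 := by
      simp [gammaL, Nat.factorial]
    rw [e2]
    exact h

theorem stmt_1 (l : ℕ) (hl : l ≤ 2) :
    ∃ θ₀ ∈ Set.Ioo (π/2) π, ∀ θ ∈ Set.Ioo (π/2) θ₀,
      ∃ c > (0:ℝ), ∀ τ > (0:ℝ), ∀ z : ℂ, InSector θ z → |z.im| ≤ π/τ →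
        ‖(gammaL l (Complex.exp (-z*τ)) / (l.factorial : ℂ)) * (τ:ℂ)^(l+1)
            - z ^ (-(l:ℤ) - 1)‖ ≤ c * τ^(l+1) := by
  obtain ⟨δ, hδ, hδle⟩ := delta_exists
  have hπ := Real.pi_pos
  refine ⟨2*π/3, ⟨by linarith, by linarith⟩, fun θ hθ => ?_⟩
  refine ⟨Real.exp 8/δ^3 + Real.exp 8/δ^2 + Real.exp 8/δ + 10, by positivity, ?_⟩
  intro τ hτ z hz hzim
  obtain ⟨hz0, harg⟩ := hz
  have hτ0 : (τ:ℂ) ≠ 0 := by exact_mod_cast hτ.ne'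
  set w : ℂ := z * (τ:ℂ) with hwdef
  have hw0 : w ≠ 0 := mul_ne_zero hz0 hτ0
  have hargw : Complex.arg w = Complex.arg z := by
    rw [hwdef, mul_comm]; exact Complex.arg_real_mul z hτ
  have hwim : |w.im| ≤ π := by
    have e : w.im = z.im * τ := by rw [hwdef]; simp [Complex.mul_im]
    rw [e, abs_mul, abs_of_pos hτ]
    calc |z.im| * τ ≤ (π/τ) * τ := mul_le_mul_of_nonneg_right hzim hτ.le
      _ = π := by field_simp
  have hre : 4 ≤ ‖w‖ → 2 ≤ w.re := fun h4 =>
    sector_re w hw0 (by rw [hargw]; linarith [harg, hθ.2]) hwim h4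
  have key := FBound δ hδ hδle l hl w hw0 hre
  -- rewrite the goal
  have hexp : -z*(τ:ℂ) = -w := by rw [hwdef]; ring
  have hz1 : z ^ (-(l:ℤ) - 1) = w ^ (-(l:ℤ) - 1) * (τ:ℂ)^(l+1) := by
    rw [show ((τ:ℂ))^(l+1) = (τ:ℂ)^(((l+1:ℕ)):ℤ) from (zpow_natCast _ _).symm,
      hwdef, mul_zpow, mul_assoc, ← zpow_add₀ hτ0]
    norm_num
  rw [hexp, hz1, show gammaL l (Complex.exp (-w)) / (l.factorial : ℂ) * (τ:ℂ)^(l+1)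
      - w ^ (-(l:ℤ) - 1) * (τ:ℂ)^(l+1)
      = (gammaL l (Complex.exp (-w)) / (l.factorial : ℂ) - w ^ (-(l:ℤ) - 1)) * (τ:ℂ)^(l+1)
    from (sub_mul _ _ _).symm]
  rw [norm_mul, norm_pow, Complex.norm_real, Real.norm_eq_abs, abs_of_pos hτ]
  exact mul_le_mul_of_nonneg_right key (by positivity)
end
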